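/- Let m > 2 and suppose c = (1,1,…,1) ∈ ℤ^m (all entries equal to 1) is a λ-quiddity cycle. Then c is irreducible over the positive integers ℕ_{>0}: there do not exist k, l > 2 with k + l − 2 = m, a λ′-quiddity cycle a ∈ (ℕ_{>0})^k, a λ″-quiddity cycle b ∈ (ℕ_{>0})^l with λ = −λ′λ″, and σ ∈ D_m such that c = (a ⊕ b)^σ. -/

import Mathlib

open Matrix

/-- The 2×2 matrix `[[x, -1], [1, 0]]` associated to an entry of a quiddity cycle. -/
def qMat {R : Type*} [CommRing R] (x : R) : Matrix (Fin 2) (Fin 2) R := !![x, -1; 1, 0]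

/-- `c` is a `lam`-quiddity cycle: the product `∏ [[cₜ,−1],[1,0]]` equals `lam • Id`. -/
def IsQC {R : Type*} [CommRing R] (lam : R) (c : List R) : Prop :=
  (c.map qMat).prod = lam • (1 : Matrix (Fin 2) (Fin 2) R)

/-- `a ⊕ b = (a₁+b_l, a₂, …, a_{k−1}, a_k+b₁, b₂, …, b_{l−1})`. -/
def oplus {R : Type*} [CommRing R] (a b : List R) : List R :=
  (a.head?.getD 0 + b.getLast?.getD 0) ::
    ((a.drop 1).dropLast ++ (a.getLast?.getD 0 + b.head?.getD 0) :: (b.drop 1).dropLast)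

/-- Dihedral equivalence: `a` is a cyclic rotation of `b` or of the reversal of `b`,
i.e. `a = b^σ` for some `σ` in the dihedral group acting on `n` points. -/
def DihEquiv {α : Type*} (a b : List α) : Prop :=
  ∃ i : ℕ, a = b.rotate i ∨ a = b.reverse.rotate i

/-- The action of a dihedral group element, encoded by a rotation amount and a reversal flag. -/
def applyDih {α : Type*} (p : ℕ × Bool) (c : List α) : List α :=
  if p.2 then c.reverse.rotate p.1 else c.rotate p.1

/-- If `c = (1,…,1) ∈ ℤ^m` (`m > 2`) is a `λ`-quiddity cycle, then it is irreducible over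
`ℕ_{>0}`: there are no quiddity cycles `a`, `b` over the positive integers of lengths
`k, l > 2` with `k + l − 2 = m`, `λ = −λ'λ''`, and `c = (a ⊕ b)^σ` for some `σ ∈ D_m`. -/
theorem stmt10 (m : ℕ) (hm : 2 < m) (lam : ℤ) (hlam : lam = 1 ∨ lam = -1)
    (hqc : IsQC lam (List.replicate m (1 : ℤ))) :
    ¬ ∃ (lam' lam'' : ℤ) (a b : List ℤ),
        (lam' = 1 ∨ lam' = -1) ∧ (lam'' = 1 ∨ lam'' = -1) ∧
        (∀ x ∈ a, 0 < x) ∧ (∀ x ∈ b, 0 < x) ∧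
        IsQC lam' a ∧ IsQC lam'' b ∧
        2 < a.length ∧ 2 < b.length ∧ a.length + b.length - 2 = m ∧
        lam = -(lam' * lam'') ∧
        DihEquiv (List.replicate m (1 : ℤ)) (oplus a b) := by
  rintro ⟨lam', lam'', a, b, -, -, hapos, hbpos, -, -, hka, hkb, -, -, i, hrot⟩
  have ha : a ≠ [] := by intro h; simp [h] at hka
  have hb : b ≠ [] := by intro h; simp [h] at hkb
  have hmem : (a.head?.getD 0 + b.getLast?.getD 0) ∈ oplus a b :=
    List.mem_cons_self
  have h1 : a.head?.getD 0 + b.getLast?.getD 0 = (1 : ℤ) := by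
    rcases hrot with h | h
    · rw [← List.mem_rotate (n := i), ← h] at hmem
      exact List.eq_of_mem_replicate hmem
    · rw [← List.mem_reverse, ← List.mem_rotate (n := i), ← h] at hmem
      exact List.eq_of_mem_replicate hmem
  have hah : 0 < a.head?.getD 0 := by
    rw [List.head?_eq_head ha]
    exact hapos _ (List.head_mem ha)
  have hbh : 0 < b.getLast?.getD 0 := by
    rw [List.getLast?_eq_getLast hb]
    exact hbpos _ (List.getLast_mem hb)
  omega
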